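/- Let Ω ⊆ ℝ² be a measurable set with finite Lebesgue measure, let γ ∈ (2/3, 1), and let C₀, M > 0. Then there exist an exponent q ∈ (1, ∞) and constants α > 0 and C > 0 such that for every ε ∈ (0, 1], every measurable f : Ω → [0, ∞) with ‖f‖_{L²(Ω)} ≤ C₀ · ε^{γ−1}, and every nonnegative g ∈ L^q(Ω), one has ε · ∫_{{x ∈ Ω : ε f(x) ≤ M}} f(x)² g(x) dx ≤ C · ε^α · ‖g‖_{L^q(Ω)}. -/

import Mathlib

open MeasureTheory Set

/-- Lemma A.2 (Lᵖ-bounds) of the paper: the quadratic error terms in the rescaled displacement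
gradient vanish in the linearization limit. -/
theorem lp_bound_lemma (Ω : Set (EuclideanSpace ℝ (Fin 2))) (hΩm : MeasurableSet Ω)
    (hΩfin : volume Ω < ⊤) (γ : ℝ) (hγ : γ ∈ Ioo (2 / 3 : ℝ) 1)
    (C₀ M : ℝ) (hC₀ : 0 < C₀) (hM : 0 < M) :
    ∃ q : ℝ, 1 < q ∧ ∃ α > (0 : ℝ), ∃ C > (0 : ℝ),
      ∀ ε ∈ Ioc (0 : ℝ) 1,
        ∀ f : EuclideanSpace ℝ (Fin 2) → ℝ, Measurable f → (∀ x, 0 ≤ f x) →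
          IntegrableOn (fun x => f x ^ 2) Ω →
          (∫ x in Ω, f x ^ 2) ^ (1 / 2 : ℝ) ≤ C₀ * ε ^ (γ - 1) →
          ∀ g : EuclideanSpace ℝ (Fin 2) → ℝ, Measurable g → (∀ x, 0 ≤ g x) →
            IntegrableOn (fun x => g x ^ q) Ω →
            ε * ∫ x in {x ∈ Ω | ε * f x ≤ M}, f x ^ 2 * g x ≤
              C * ε ^ α * (∫ x in Ω, g x ^ q) ^ (1 / q) := by
  obtain ⟨hγ1, hγ2⟩ := hγ
  refine ⟨4, by norm_num, 3 * γ / 2 - 1, by linarith, M ^ (1/2:ℝ) * C₀ ^ (3/2:ℝ),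
    by positivity, ?_⟩
  rintro ε ⟨hε0, hε1⟩ f hfm hf0 hfint hfL2 g hgm hg0 hgint
  set S : Set (EuclideanSpace ℝ (Fin 2)) := {x ∈ Ω | ε * f x ≤ M} with hSdef
  have hSm : MeasurableSet S := hΩm.inter (measurableSet_le (hfm.const_mul ε) measurable_const)
  have hSsub : S ⊆ Ω := fun x hx => hx.1
  -- pointwise a.e. bound on S
  have hptwise : ∀ x ∈ S, (f x ^ 2) ^ ((4:ℝ)/3) ≤ (M/ε) ^ ((2:ℝ)/3) * f x ^ 2 := by
    intro x hx
    have hfx : f x ≤ M / ε := by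
      rw [le_div_iff₀ hε0, mul_comm]; exact hx.2
    have h1 : (f x ^ 2) ^ ((4:ℝ)/3) = f x ^ ((2:ℝ)/3) * f x ^ 2 := by
      rw [← Real.rpow_natCast (f x) 2, ← Real.rpow_mul (hf0 x),
        ← Real.rpow_add' (hf0 x) (by norm_num)]
      norm_num
    rw [h1]
    have h2 : f x ^ ((2:ℝ)/3) ≤ (M/ε) ^ ((2:ℝ)/3) :=
      Real.rpow_le_rpow (hf0 x) hfx (by norm_num)
    exact mul_le_mul_of_nonneg_right h2 (sq_nonneg _)
  have hae : ∀ᵐ x ∂(volume.restrict S),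
      (f x ^ 2) ^ ((4:ℝ)/3) ≤ (M/ε) ^ ((2:ℝ)/3) * f x ^ 2 := by
    filter_upwards [ae_restrict_mem hSm] with x hx using hptwise x hx
  have hf2S : IntegrableOn (fun x => f x ^ 2) S := hfint.mono_set hSsub
  have h83m : Measurable fun x => (f x ^ 2) ^ ((4:ℝ)/3) :=
    (Real.continuous_rpow_const (by norm_num)).measurable.comp (hfm.pow_const 2)
  have h83int : IntegrableOn (fun x => (f x ^ 2) ^ ((4:ℝ)/3)) S := by
    refine Integrable.mono' (hf2S.const_mul ((M/ε) ^ ((2:ℝ)/3)))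
      h83m.aestronglyMeasurable ?_
    filter_upwards [hae] with x hx
    rw [Real.norm_of_nonneg (Real.rpow_nonneg (sq_nonneg _) _)]
    exact hx
  have hg4S : IntegrableOn (fun x => g x ^ (4:ℝ)) S := hgint.mono_set hSsub
  -- Memℒp facts for Hölder
  have hf2mem : MemLp (fun x => f x ^ 2) (ENNReal.ofReal (4/3)) (volume.restrict S) := by
    have h43 : (ENNReal.ofReal (4/3)) ≠ 0 := by
      simp only [ne_eq, ENNReal.ofReal_eq_zero, not_le]; norm_num
    refine (memLp_norm_rpow_iff ((hfm.pow_const 2).aestronglyMeasurable) h43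
      ENNReal.ofReal_ne_top).1 ?_
    rw [ENNReal.div_self h43 ENNReal.ofReal_ne_top, memLp_one_iff_integrable]
    have : (fun x => ‖f x ^ 2‖ ^ (ENNReal.ofReal (4/3)).toReal)
        = fun x => (f x ^ 2) ^ ((4:ℝ)/3) := by
      funext x
      rw [Real.norm_of_nonneg (sq_nonneg _), ENNReal.toReal_ofReal (by norm_num)]
    rw [this]
    exact h83int
  have hgmem : MemLp g (ENNReal.ofReal 4) (volume.restrict S) := by
    have h4 : (ENNReal.ofReal 4) ≠ 0 := by
      simp only [ne_eq, ENNReal.ofReal_eq_zero, not_le]; norm_num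
    refine (memLp_norm_rpow_iff hgm.aestronglyMeasurable h4 ENNReal.ofReal_ne_top).1 ?_
    rw [ENNReal.div_self h4 ENNReal.ofReal_ne_top, memLp_one_iff_integrable]
    have : (fun x => ‖g x‖ ^ (ENNReal.ofReal 4).toReal) = fun x => g x ^ (4:ℝ) := by
      funext x
      rw [Real.norm_of_nonneg (hg0 x), ENNReal.toReal_ofReal (by norm_num)]
    rw [this]
    exact hg4S
  -- Hölder
  have hpq : Real.HolderConjugate (4/3) 4 := ⟨by norm_num, by norm_num, by norm_num⟩
  have holder := integral_mul_le_Lp_mul_Lq_of_nonneg hpq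
    (ae_of_all _ fun x => sq_nonneg (f x)) (ae_of_all _ hg0) hf2mem hgmem
  -- bound for ∫_Ω f²
  have hI0 : (0:ℝ) ≤ ∫ x in Ω, f x ^ 2 := setIntegral_nonneg hΩm fun x _ => sq_nonneg _
  have hI : (∫ x in Ω, f x ^ 2) ≤ (C₀ * ε ^ (γ - 1)) ^ 2 := by
    have h := pow_le_pow_left₀ (Real.rpow_nonneg hI0 _) hfL2 2
    rwa [← Real.rpow_natCast ((∫ x in Ω, f x ^ 2) ^ (1/2:ℝ)) 2,
      ← Real.rpow_mul hI0, show (1/2:ℝ) * (2:ℕ) = 1 by norm_num, Real.rpow_one] at h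
  have hf2SΩ : (∫ x in S, f x ^ 2) ≤ ∫ x in Ω, f x ^ 2 :=
    setIntegral_mono_set hfint (ae_of_all _ fun x => sq_nonneg _)
      (HasSubset.Subset.eventuallyLE hSsub)
  -- bound for the first Hölder factor
  have hA : (∫ x in S, (f x ^ 2) ^ ((4:ℝ)/3)) ≤ (M/ε) ^ ((2:ℝ)/3) * (C₀ * ε ^ (γ - 1)) ^ 2 := by
    calc (∫ x in S, (f x ^ 2) ^ ((4:ℝ)/3))
        ≤ ∫ x in S, (M/ε) ^ ((2:ℝ)/3) * f x ^ 2 :=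
          integral_mono_ae h83int (hf2S.const_mul _) hae
      _ = (M/ε) ^ ((2:ℝ)/3) * ∫ x in S, f x ^ 2 := integral_const_mul _ _
      _ ≤ (M/ε) ^ ((2:ℝ)/3) * (C₀ * ε ^ (γ - 1)) ^ 2 := by
          exact mul_le_mul_of_nonneg_left (hf2SΩ.trans hI) (by positivity)
  -- bound for the second Hölder factor
  have hB : (∫ x in S, g x ^ (4:ℝ)) ≤ ∫ x in Ω, g x ^ (4:ℝ) :=
    setIntegral_mono_set hgint (ae_of_all _ fun x => Real.rpow_nonneg (hg0 x) _)
      (HasSubset.Subset.eventuallyLE hSsub)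
  have hA0 : (0:ℝ) ≤ ∫ x in S, (f x ^ 2) ^ ((4:ℝ)/3) :=
    setIntegral_nonneg hSm fun x _ => Real.rpow_nonneg (sq_nonneg _) _
  have hB0 : (0:ℝ) ≤ ∫ x in S, g x ^ (4:ℝ) :=
    setIntegral_nonneg hSm fun x _ => Real.rpow_nonneg (hg0 x) _
  -- combine
  have hBq : (∫ x in S, g x ^ (4:ℝ)) ^ (1/(4:ℝ)) ≤ (∫ x in Ω, g x ^ (4:ℝ)) ^ (1/(4:ℝ)) :=
    Real.rpow_le_rpow hB0 hB (by norm_num)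
  have hAq : (∫ x in S, (f x ^ 2) ^ ((4:ℝ)/3)) ^ (1/((4:ℝ)/3))
      ≤ ((M/ε) ^ ((2:ℝ)/3) * (C₀ * ε ^ (γ - 1)) ^ 2) ^ (1/((4:ℝ)/3)) :=
    Real.rpow_le_rpow hA0 hA (by norm_num)
  have e1 : ((M/ε) ^ ((2:ℝ)/3)) ^ ((3:ℝ)/4) = M ^ (1/2:ℝ) / ε ^ (1/2:ℝ) := by
    rw [← Real.rpow_mul (by positivity), Real.div_rpow hM.le hε0.le]
    norm_num
  have e2 : ((C₀ * ε ^ (γ - 1)) ^ 2) ^ ((3:ℝ)/4) = C₀ ^ (3/2:ℝ) * ε ^ ((γ-1) * (3/2:ℝ)) := by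
    rw [← Real.rpow_natCast (C₀ * ε ^ (γ - 1)) 2, ← Real.rpow_mul (by positivity),
      Real.mul_rpow hC₀.le (by positivity), ← Real.rpow_mul hε0.le]
    norm_num
  have e3 : ε ^ (3 * γ / 2 - 1) * ε ^ ((1:ℝ)/2) = ε * ε ^ ((γ-1) * (3/2:ℝ)) := by
    rw [← Real.rpow_add hε0]
    nth_rewrite 2 [← Real.rpow_one ε]
    rw [← Real.rpow_add hε0]
    ring_nf
  have hkey : ε * ((M/ε) ^ ((2:ℝ)/3) * (C₀ * ε ^ (γ - 1)) ^ 2) ^ (1/((4:ℝ)/3))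
      = M ^ (1/2:ℝ) * C₀ ^ (3/2:ℝ) * ε ^ (3 * γ / 2 - 1) := by
    have hne : ε ^ (1/2:ℝ) ≠ 0 := by positivity
    calc ε * ((M/ε) ^ ((2:ℝ)/3) * (C₀ * ε ^ (γ - 1)) ^ 2) ^ (1/((4:ℝ)/3))
        = ε * (M ^ (1/2:ℝ) / ε ^ (1/2:ℝ) * (C₀ ^ (3/2:ℝ) * ε ^ ((γ-1) * (3/2:ℝ)))) := by
          rw [show (1/((4:ℝ)/3)) = ((3:ℝ)/4) by norm_num,
            Real.mul_rpow (by positivity) (by positivity), e1, e2]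
      _ = M ^ (1/2:ℝ) * C₀ ^ (3/2:ℝ) * (ε * ε ^ ((γ-1) * (3/2:ℝ)) / ε ^ (1/2:ℝ)) := by
          ring
      _ = M ^ (1/2:ℝ) * C₀ ^ (3/2:ℝ) * ε ^ (3 * γ / 2 - 1) := by
          congr 1
          rw [div_eq_iff hne]
          exact e3.symm
  calc ε * ∫ x in S, f x ^ 2 * g x
      ≤ ε * (((∫ x in S, (f x ^ 2) ^ ((4:ℝ)/3)) ^ (1/((4:ℝ)/3))) *
        ((∫ x in S, g x ^ (4:ℝ)) ^ (1/(4:ℝ)))) := by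
        exact mul_le_mul_of_nonneg_left holder hε0.le
    _ ≤ ε * ((((M/ε) ^ ((2:ℝ)/3) * (C₀ * ε ^ (γ - 1)) ^ 2) ^ (1/((4:ℝ)/3))) *
        ((∫ x in Ω, g x ^ (4:ℝ)) ^ (1/(4:ℝ)))) := by
        refine mul_le_mul_of_nonneg_left ?_ hε0.le
        exact mul_le_mul hAq hBq (Real.rpow_nonneg hB0 _)
          (Real.rpow_nonneg (by positivity) _)
    _ = M ^ (1/2:ℝ) * C₀ ^ (3/2:ℝ) * ε ^ (3 * γ / 2 - 1) *
        (∫ x in Ω, g x ^ (4:ℝ)) ^ (1/(4:ℝ)) := by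
        rw [← mul_assoc, hkey]
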